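/- arXiv:2503.03169 — 4 statements merged into one kernel-verified Lean document; each statement's English description precedes it below -/
import Mathlib

section
/- Let q ∈ (1,2], T > 0, and f : [0,T] → ℝⁿ measurable with ‖f(τ)‖ ≤ P for a.e. τ ∈ [0,T], where P ≥ 0. Define φ(t) = (1/Γ(q)) ∫₀^t (t-τ)^{q-1} f(τ) dτ - (t/(Γ(q)T)) ∫₀^T (T-τ)^{q-1} f(τ) dτ. Then for all 0 ≤ t₁ ≤ t₂ ≤ T, ‖φ(t₂) - φ(t₁)‖ ≤ (P(2 + T^{q-1})/Γ(q+1))(t₂ - t₁) + (P/Γ(q+1))(t₂^q - t₁^q). In particular φ is continuous on [0,T]. -/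
open MeasureTheory Real

theorem stmt_1 {n : ℕ} (q T P : ℝ) (hq1 : 1 < q) (hq2 : q ≤ 2) (hT : 0 < T) (hP : 0 ≤ P)
    (f : ℝ → EuclideanSpace ℝ (Fin n)) (hf : Measurable f)
    (hbd : ∀ᵐ τ ∂(volume.restrict (Set.Icc 0 T)), ‖f τ‖ ≤ P)
    (φ : ℝ → EuclideanSpace ℝ (Fin n))
    (hφ : ∀ t, φ t = (1 / Real.Gamma q) • (∫ τ in (0:ℝ)..t, (t - τ) ^ (q - 1) • f τ)
        - (t / (Real.Gamma q * T)) • (∫ τ in (0:ℝ)..T, (T - τ) ^ (q - 1) • f τ)) :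
    (∀ t₁ t₂ : ℝ, 0 ≤ t₁ → t₁ ≤ t₂ → t₂ ≤ T →
      ‖φ t₂ - φ t₁‖ ≤ P * (2 + T ^ (q - 1)) / Real.Gamma (q + 1) * (t₂ - t₁)
        + P / Real.Gamma (q + 1) * (t₂ ^ q - t₁ ^ q)) ∧
    ContinuousOn φ (Set.Icc 0 T) := by
  have hq0 : 0 < q := by linarith
  have hΓ : 0 < Real.Gamma q := Real.Gamma_pos_of_pos (by linarith)
  have hΓ1 : Real.Gamma (q + 1) = q * Real.Gamma q := Real.Gamma_add_one hq0.ne'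
  have hc : Continuous (fun x : ℝ => x ^ (q - 1)) :=
    continuous_iff_continuousAt.2 fun x => Real.continuousAt_rpow_const x _ (Or.inr (by linarith))
  have hci : ∀ s : ℝ, Continuous (fun τ : ℝ => (s - τ) ^ (q - 1)) :=
    fun s => hc.comp (continuous_const.sub continuous_id)
  have hval : ∀ s a b : ℝ, (∫ τ in a..b, (s - τ) ^ (q - 1)) = ((s - a) ^ q - (s - b) ^ q) / q := by
    intro s a b
    rw [intervalIntegral.integral_comp_sub_left (fun x => x ^ (q - 1)) s,
      integral_rpow (Or.inl (by linarith))]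
    rw [show q - 1 + 1 = q by ring]
  have hint : ∀ s a b : ℝ, 0 ≤ a → a ≤ b → b ≤ s → s ≤ T →
      IntervalIntegrable (fun τ => (s - τ) ^ (q - 1) • f τ) volume a b := by
    intro s a b ha hab hbs hsT
    rw [intervalIntegrable_iff_integrableOn_Ioc_of_le hab]
    refine Integrable.mono' ((integrableOn_const_iff (C := T ^ (q-1) * P)).2 (Or.inr measure_Ioc_lt_top))
      (((hci s).measurable.smul hf)).aestronglyMeasurable ?_
    have hbd' : ∀ᵐ τ ∂(volume.restrict (Set.Ioc a b)), ‖f τ‖ ≤ P :=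
      ae_restrict_of_ae_restrict_of_subset
        (Set.Ioc_subset_Icc_self.trans (Set.Icc_subset_Icc ha (hbs.trans hsT))) hbd
    filter_upwards [hbd', ae_restrict_mem measurableSet_Ioc] with τ hτP hτm
    rw [norm_smul, Real.norm_eq_abs, abs_of_nonneg (Real.rpow_nonneg (by linarith [hτm.2]) _)]
    exact mul_le_mul
      (Real.rpow_le_rpow (by linarith [hτm.2]) (by linarith [hτm.1, ha]) (by linarith))
      hτP (norm_nonneg _) (Real.rpow_nonneg hT.le _)
  -- norm bound for single kernel
  have hnorm : ∀ s a b : ℝ, 0 ≤ a → a ≤ b → b ≤ s → s ≤ T →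
      ‖∫ τ in a..b, (s - τ) ^ (q - 1) • f τ‖ ≤ P * ((s - a) ^ q - (s - b) ^ q) / q := by
    intro s a b ha hab hbs hsT
    have hg : IntervalIntegrable (fun τ => P * (s - τ) ^ (q - 1)) volume a b :=
      (continuous_const.mul (hci s)).intervalIntegrable _ _
    have hbd' : ∀ᵐ τ ∂(volume.restrict (Set.uIoc a b)), ‖f τ‖ ≤ P := by
      rw [Set.uIoc_of_le hab]
      exact ae_restrict_of_ae_restrict_of_subset
        (Set.Ioc_subset_Icc_self.trans (Set.Icc_subset_Icc ha (hbs.trans hsT))) hbd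
    refine le_trans (intervalIntegral.norm_integral_le_abs_of_norm_le
      (g := fun τ => P * (s - τ) ^ (q - 1)) ?_ hg) (le_of_eq ?_)
    · filter_upwards [hbd', ae_restrict_mem measurableSet_uIoc] with τ hτP hτm
      have hτ : a < τ ∧ τ ≤ b := by rwa [Set.uIoc_of_le hab] at hτm
      rw [norm_smul, Real.norm_eq_abs, abs_of_nonneg (Real.rpow_nonneg (by linarith [hτ.2]) _),
        mul_comm P]
      exact mul_le_mul_of_nonneg_left hτP (Real.rpow_nonneg (by linarith [hτ.2]) _)
    · rw [intervalIntegral.integral_const_mul, hval, abs_of_nonneg]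
      · ring
      · have h' : (s - b) ^ q ≤ (s - a) ^ q :=
          Real.rpow_le_rpow (by linarith) (by linarith) hq0.le
        exact mul_nonneg hP (div_nonneg (sub_nonneg.2 h') hq0.le)
  -- norm bound for kernel difference
  have hnorm2 : ∀ s₁ s₂ a b : ℝ, 0 ≤ a → a ≤ b → b ≤ s₁ → s₁ ≤ s₂ → s₂ ≤ T →
      ‖∫ τ in a..b, ((s₂ - τ) ^ (q - 1) - (s₁ - τ) ^ (q - 1)) • f τ‖ ≤
        P * (((s₂ - a) ^ q - (s₂ - b) ^ q) - ((s₁ - a) ^ q - (s₁ - b) ^ q)) / q := by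
    intro s₁ s₂ a b ha hab hb1 h12 h2T
    have hg : IntervalIntegrable
        (fun τ => P * ((s₂ - τ) ^ (q - 1) - (s₁ - τ) ^ (q - 1))) volume a b :=
      (continuous_const.mul ((hci s₂).sub (hci s₁))).intervalIntegrable _ _
    refine le_trans (intervalIntegral.norm_integral_le_abs_of_norm_le
      (g := fun τ => P * ((s₂ - τ) ^ (q - 1) - (s₁ - τ) ^ (q - 1))) ?_ hg) (le_of_eq ?_)
    case _ =>
      have hbd' : ∀ᵐ τ ∂(volume.restrict (Set.uIoc a b)), ‖f τ‖ ≤ P := by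
        rw [Set.uIoc_of_le hab]
        exact ae_restrict_of_ae_restrict_of_subset
          (Set.Ioc_subset_Icc_self.trans (Set.Icc_subset_Icc ha ((hb1.trans h12).trans h2T))) hbd
      filter_upwards [hbd', ae_restrict_mem measurableSet_uIoc] with τ hτP hτm
      have hτ : a < τ ∧ τ ≤ b := by rwa [Set.uIoc_of_le hab] at hτm
      have hd : 0 ≤ (s₂ - τ) ^ (q - 1) - (s₁ - τ) ^ (q - 1) := by
        have := Real.rpow_le_rpow (show (0:ℝ) ≤ s₁ - τ by linarith [hτ.2])
          (show s₁ - τ ≤ s₂ - τ by linarith) (by linarith : (0:ℝ) ≤ q - 1)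
        linarith
      rw [norm_smul, Real.norm_eq_abs, abs_of_nonneg hd, mul_comm P]
      exact mul_le_mul_of_nonneg_left hτP hd
    case _ =>
      rw [intervalIntegral.integral_const_mul, intervalIntegral.integral_sub
        ((hci s₂).intervalIntegrable _ _) ((hci s₁).intervalIntegrable _ _),
        hval, hval, abs_of_nonneg]
      · ring
      · have e1 : (s₁ - a) ^ q - (s₁ - b) ^ q ≤ (s₂ - a) ^ q - (s₂ - b) ^ q := by
          have h := intervalIntegral.integral_mono_on (μ := volume) hab ((hci s₁).intervalIntegrable a b)
            ((hci s₂).intervalIntegrable a b) (fun x hx => Real.rpow_le_rpow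
              (by linarith [hx.2]) (by linarith) (by linarith))
          rw [hval, hval] at h
          exact (div_le_div_iff_of_pos_right hq0).1 h
        exact mul_nonneg hP (sub_nonneg.2 ((div_le_div_iff_of_pos_right hq0).2 e1))
  have hzero : (0:ℝ) ^ q = 0 := Real.zero_rpow hq0.ne'
  have hTq : (T:ℝ) ^ q = T ^ (q - 1) * T := by
    have h := Real.rpow_add_one hT.ne' (q - 1)
    rwa [show q - 1 + 1 = q by ring] at h
  have main : ∀ t₁ t₂ : ℝ, 0 ≤ t₁ → t₁ ≤ t₂ → t₂ ≤ T →
      ‖φ t₂ - φ t₁‖ ≤ P * (2 + T ^ (q - 1)) / Real.Gamma (q + 1) * (t₂ - t₁)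
        + P / Real.Gamma (q + 1) * (t₂ ^ q - t₁ ^ q) := by
    intro t₁ t₂ h0 h12 h2T
    have h1T : t₁ ≤ T := h12.trans h2T
    have hsplit : (∫ τ in (0:ℝ)..t₂, (t₂ - τ) ^ (q - 1) • f τ)
        = (∫ τ in (0:ℝ)..t₁, (t₂ - τ) ^ (q - 1) • f τ)
          + ∫ τ in t₁..t₂, (t₂ - τ) ^ (q - 1) • f τ :=
      (intervalIntegral.integral_add_adjacent_intervals
        (hint t₂ 0 t₁ le_rfl h0 h12 h2T) (hint t₂ t₁ t₂ h0 h12 le_rfl h2T)).symm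
    have hA : (∫ τ in (0:ℝ)..t₁, (t₂ - τ) ^ (q - 1) • f τ)
          - (∫ τ in (0:ℝ)..t₁, (t₁ - τ) ^ (q - 1) • f τ)
        = ∫ τ in (0:ℝ)..t₁, ((t₂ - τ) ^ (q - 1) - (t₁ - τ) ^ (q - 1)) • f τ := by
      rw [← intervalIntegral.integral_sub (hint t₂ 0 t₁ le_rfl h0 h12 h2T)
        (hint t₁ 0 t₁ le_rfl h0 le_rfl h1T)]
      simp only [sub_smul]
    have hdecomp : φ t₂ - φ t₁ =
        (1 / Real.Gamma q) • (∫ τ in (0:ℝ)..t₁, ((t₂ - τ) ^ (q - 1) - (t₁ - τ) ^ (q - 1)) • f τ)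
        + (1 / Real.Gamma q) • (∫ τ in t₁..t₂, (t₂ - τ) ^ (q - 1) • f τ)
        - ((t₂ - t₁) / (Real.Gamma q * T)) • (∫ τ in (0:ℝ)..T, (T - τ) ^ (q - 1) • f τ) := by
      rw [hφ t₂, hφ t₁, hsplit, ← hA]
      module
    have hb1 := hnorm2 t₁ t₂ 0 t₁ le_rfl h0 le_rfl h12 h2T
    have hb2 := hnorm t₂ t₁ t₂ h0 h12 le_rfl h2T
    have hb3 := hnorm T 0 T le_rfl hT.le le_rfl le_rfl
    simp only [sub_zero, sub_self, hzero] at hb1 hb2 hb3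
    have hGpos : (0:ℝ) < Real.Gamma q * T := mul_pos hΓ hT
    calc ‖φ t₂ - φ t₁‖
        ≤ (1 / Real.Gamma q) *
            ‖∫ τ in (0:ℝ)..t₁, ((t₂ - τ) ^ (q - 1) - (t₁ - τ) ^ (q - 1)) • f τ‖
          + (1 / Real.Gamma q) * ‖∫ τ in t₁..t₂, (t₂ - τ) ^ (q - 1) • f τ‖
          + ((t₂ - t₁) / (Real.Gamma q * T)) * ‖∫ τ in (0:ℝ)..T, (T - τ) ^ (q - 1) • f τ‖ := by
          rw [hdecomp]
          have e1 : |1 / Real.Gamma q| = 1 / Real.Gamma q := abs_of_nonneg (by positivity)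
          have e2 : |(t₂ - t₁) / (Real.Gamma q * T)| = (t₂ - t₁) / (Real.Gamma q * T) :=
            abs_of_nonneg (div_nonneg (by linarith) hGpos.le)
          refine le_trans ((norm_sub_le _ _).trans (add_le_add_left (norm_add_le _ _) _))
            (le_of_eq ?_)
          simp only [norm_smul, Real.norm_eq_abs, e1, e2]
      _ ≤ (1 / Real.Gamma q) * (P * ((t₂ ^ q - (t₂ - t₁) ^ q) - t₁ ^ q) / q)
          + (1 / Real.Gamma q) * (P * (t₂ - t₁) ^ q / q)
          + ((t₂ - t₁) / (Real.Gamma q * T)) * (P * T ^ q / q) := by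
          refine add_le_add (add_le_add ?_ ?_) ?_
          · exact mul_le_mul_of_nonneg_left hb1 (by positivity)
          · exact mul_le_mul_of_nonneg_left hb2 (by positivity)
          · exact mul_le_mul_of_nonneg_left hb3 (div_nonneg (by linarith) hGpos.le)
      _ ≤ _ := by
          rw [hΓ1, hTq]
          have expand : P * (2 + T ^ (q - 1)) / (q * Real.Gamma q) * (t₂ - t₁)
              + P / (q * Real.Gamma q) * (t₂ ^ q - t₁ ^ q)
              - ((1 / Real.Gamma q) * (P * ((t₂ ^ q - (t₂ - t₁) ^ q) - t₁ ^ q) / q)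
                + (1 / Real.Gamma q) * (P * (t₂ - t₁) ^ q / q)
                + ((t₂ - t₁) / (Real.Gamma q * T)) * (P * (T ^ (q - 1) * T) / q))
              = 2 * P * (t₂ - t₁) / (q * Real.Gamma q) := by
            field_simp
            ring
          have hnn : 0 ≤ 2 * P * (t₂ - t₁) / (q * Real.Gamma q) :=
            div_nonneg (mul_nonneg (by positivity) (sub_nonneg.2 h12)) (by positivity)
          linarith [expand]
  refine ⟨main, ?_⟩
  set C₁ := P * (2 + T ^ (q - 1)) / Real.Gamma (q + 1) with hC₁
  set C₂ := P / Real.Gamma (q + 1) with hC₂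
  have hΓ' : 0 < Real.Gamma (q + 1) := by rw [hΓ1]; positivity
  set ψ : ℝ → ℝ := fun t => C₁ * t + C₂ * t ^ q with hψ
  have hrq : Continuous (fun t : ℝ => t ^ q) :=
    continuous_iff_continuousAt.2 fun x => Real.continuousAt_rpow_const x _ (Or.inr hq0.le)
  have hψc : Continuous ψ := (continuous_const.mul continuous_id).add (continuous_const.mul hrq)
  have key : ∀ x ∈ Set.Icc (0:ℝ) T, ∀ y ∈ Set.Icc (0:ℝ) T,
      dist (φ y) (φ x) ≤ dist (ψ y) (ψ x) := by
    have base : ∀ x y : ℝ, x ∈ Set.Icc (0:ℝ) T → y ∈ Set.Icc (0:ℝ) T → x ≤ y →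
        dist (φ y) (φ x) ≤ dist (ψ y) (ψ x) := by
      intro x y hx hy hxy
      rw [dist_eq_norm, Real.dist_eq]
      refine (main x y hx.1 hxy hy.2).trans (le_trans (le_of_eq ?_) (le_abs_self _))
      simp only [hψ]
      ring
    intro x hx y hy
    rcases le_total x y with h | h
    · exact base x y hx hy h
    · rw [dist_comm (φ y), dist_comm (ψ y)]
      exact base y x hy hx h
  intro x hx
  have hψw : ContinuousWithinAt ψ (Set.Icc 0 T) x := hψc.continuousWithinAt
  rw [Metric.continuousWithinAt_iff] at hψw ⊢
  intro ε hε
  obtain ⟨δ, hδ, h⟩ := hψw ε hε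
  exact ⟨δ, hδ, fun {y} hy hyd => lt_of_le_of_lt (key x hx y hy) (h hy hyd)⟩
end

section
/- Let q ∈ (1,2], T > 0, L > 0, and let f₁, f₂ : [0,T] → ℝⁿ be measurable functions and y₁, y₂ : [0,T] → ℝⁿ continuous functions such that ‖f₁(τ) - f₂(τ)‖ ≤ L‖y₁(τ) - y₂(τ)‖ for all τ ∈ [0,T]. Define φᵢ(t) = (1/Γ(q)) ∫₀^t (t-τ)^{q-1} fᵢ(τ) dτ - (t/(Γ(q)T)) ∫₀^T (T-τ)^{q-1} fᵢ(τ) dτ for i = 1,2. Then sup_{t∈[0,T]} ‖φ₁(t) - φ₂(t)‖ ≤ (2 L T^q / Γ(q+1)) · sup_{t∈[0,T]} ‖y₁(t) - y₂(t)‖. -/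
open MeasureTheory Real

theorem stmt_3 {n : ℕ} (q T L : ℝ) (hq1 : 1 < q) (hq2 : q ≤ 2) (hT : 0 < T) (hL : 0 < L)
    (f₁ f₂ : ℝ → EuclideanSpace ℝ (Fin n)) (hf₁ : Measurable f₁) (hf₂ : Measurable f₂)
    (y₁ y₂ : ℝ → EuclideanSpace ℝ (Fin n))
    (hy₁ : ContinuousOn y₁ (Set.Icc 0 T)) (hy₂ : ContinuousOn y₂ (Set.Icc 0 T))
    (hLip : ∀ τ ∈ Set.Icc (0:ℝ) T, ‖f₁ τ - f₂ τ‖ ≤ L * ‖y₁ τ - y₂ τ‖)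
    (φ₁ φ₂ : ℝ → EuclideanSpace ℝ (Fin n))
    (hφ₁ : ∀ t, φ₁ t = (1 / Real.Gamma q) • (∫ τ in (0:ℝ)..t, (t - τ) ^ (q - 1) • f₁ τ)
        - (t / (Real.Gamma q * T)) • (∫ τ in (0:ℝ)..T, (T - τ) ^ (q - 1) • f₁ τ))
    (hφ₂ : ∀ t, φ₂ t = (1 / Real.Gamma q) • (∫ τ in (0:ℝ)..t, (t - τ) ^ (q - 1) • f₂ τ)
        - (t / (Real.Gamma q * T)) • (∫ τ in (0:ℝ)..T, (T - τ) ^ (q - 1) • f₂ τ)) :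
    (⨆ t : Set.Icc (0:ℝ) T, ‖φ₁ t - φ₂ t‖)
      ≤ (2 * L * T ^ q / Real.Gamma (q + 1)) * ⨆ t : Set.Icc (0:ℝ) T, ‖y₁ t - y₂ t‖ := by
  have hq0 : (0:ℝ) < q := by linarith
  have hΓ : 0 < Real.Gamma q := Real.Gamma_pos_of_pos hq0
  set M := ⨆ t : Set.Icc (0:ℝ) T, ‖y₁ t - y₂ t‖ with hMdef
  have hne : (Set.Icc (0:ℝ) T).Nonempty := Set.nonempty_Icc.mpr hT.le
  haveI : Nonempty (Set.Icc (0:ℝ) T) := hne.to_subtype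
  have hbdd : BddAbove (Set.range fun t : Set.Icc (0:ℝ) T => ‖y₁ t - y₂ t‖) := by
    have hc : ContinuousOn (fun t => ‖y₁ t - y₂ t‖) (Set.Icc 0 T) := (hy₁.sub hy₂).norm
    have h := (isCompact_Icc.image_of_continuousOn hc).bddAbove
    rwa [Set.image_eq_range] at h
  have hMy : ∀ τ ∈ Set.Icc (0:ℝ) T, ‖y₁ τ - y₂ τ‖ ≤ M := fun τ hτ =>
    le_ciSup hbdd (⟨τ, hτ⟩ : Set.Icc (0:ℝ) T)
  have hM0 : 0 ≤ M := le_trans (norm_nonneg _) (hMy 0 ⟨le_refl _, hT.le⟩)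
  have hLM0 : 0 ≤ L * M := mul_nonneg hL.le hM0
  have hfb : ∀ τ ∈ Set.Icc (0:ℝ) T, ‖f₁ τ - f₂ τ‖ ≤ L * M := fun τ hτ =>
    (hLip τ hτ).trans (mul_le_mul_of_nonneg_left (hMy τ hτ) hL.le)
  -- key integral bound
  have key : ∀ t ∈ Set.Icc (0:ℝ) T,
      ‖(∫ τ in (0:ℝ)..t, (t - τ) ^ (q - 1) • f₁ τ)
        - (∫ τ in (0:ℝ)..t, (t - τ) ^ (q - 1) • f₂ τ)‖ ≤ L * M * t ^ q / q := by
    intro t ht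
    obtain ⟨ht0, htT⟩ := ht
    have htq0 : (0:ℝ) ≤ t ^ q := Real.rpow_nonneg ht0 _
    have hRHS0 : 0 ≤ L * M * t ^ q / q := by positivity
    have hkc : Continuous fun τ : ℝ => (t - τ) ^ (q - 1) :=
      (continuous_const.sub continuous_id).rpow_const (fun _ => Or.inr (by linarith))
    have hmeas : Measurable fun τ => (t - τ) ^ (q - 1) • (f₁ τ - f₂ τ) :=
      hkc.measurable.smul (hf₁.sub hf₂)
    have hnormb : ∀ τ ∈ Set.Ioc (0:ℝ) t,
        ‖(t - τ) ^ (q - 1) • (f₁ τ - f₂ τ)‖ ≤ (t - τ) ^ (q - 1) * (L * M) := by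
      intro τ hτ
      have h0 : (0:ℝ) ≤ t - τ := by linarith [hτ.2]
      rw [norm_smul, Real.norm_eq_abs, abs_of_nonneg (Real.rpow_nonneg h0 _)]
      exact mul_le_mul_of_nonneg_left (hfb τ ⟨hτ.1.le, hτ.2.trans htT⟩)
        (Real.rpow_nonneg h0 _)
    have hker_int : IntervalIntegrable (fun τ => (t - τ) ^ (q - 1) • (f₁ τ - f₂ τ))
        volume 0 t := by
      rw [intervalIntegrable_iff_integrableOn_Ioc_of_le ht0]
      apply Integrable.mono' (g := fun _ => t ^ (q - 1) * (L * M)) (integrable_const _)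
        hmeas.aestronglyMeasurable
      filter_upwards [ae_restrict_mem measurableSet_Ioc] with τ hτ
      refine (hnormb τ hτ).trans (mul_le_mul_of_nonneg_right ?_ hLM0)
      exact Real.rpow_le_rpow (by linarith [hτ.2]) (by linarith [hτ.1]) (by linarith)
    have hkernel : (∫ τ in (0:ℝ)..t, (t - τ) ^ (q - 1)) = t ^ q / q := by
      rw [intervalIntegral.integral_comp_sub_left (fun x => x ^ (q - 1)) t, sub_self, sub_zero,
        integral_rpow (Or.inl (by linarith))]
      rw [sub_add_cancel, Real.zero_rpow hq0.ne', sub_zero]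
    by_cases h1 : IntervalIntegrable (fun τ => (t - τ) ^ (q - 1) • f₁ τ) volume 0 t
    · have h2 : IntervalIntegrable (fun τ => (t - τ) ^ (q - 1) • f₂ τ) volume 0 t := by
        have h := h1.sub hker_int
        simpa [smul_sub] using h
      rw [← intervalIntegral.integral_sub h1 h2]
      simp_rw [← smul_sub]
      have hker1_int : IntervalIntegrable (fun τ => (t - τ) ^ (q - 1) * (L * M)) volume 0 t := by
        apply IntervalIntegrable.mul_const
        rw [intervalIntegrable_iff_integrableOn_Ioc_of_le ht0]
        apply Integrable.mono' (g := fun _ => t ^ (q - 1)) (integrable_const _)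
          hkc.measurable.aestronglyMeasurable
        filter_upwards [ae_restrict_mem measurableSet_Ioc] with τ hτ
        rw [Real.norm_eq_abs, abs_of_nonneg (Real.rpow_nonneg (by linarith [hτ.2]) _)]
        exact Real.rpow_le_rpow (by linarith [hτ.2]) (by linarith [hτ.1]) (by linarith)
      have hbound : ‖∫ τ in (0:ℝ)..t, (t - τ) ^ (q - 1) • (f₁ τ - f₂ τ)‖
          ≤ |∫ τ in (0:ℝ)..t, (t - τ) ^ (q - 1) * (L * M)| := by
        apply intervalIntegral.norm_integral_le_abs_of_norm_le _ hker1_int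
        rw [Set.uIoc_of_le ht0]
        filter_upwards [ae_restrict_mem measurableSet_Ioc] with τ hτ
        exact hnormb τ hτ
      refine hbound.trans ?_
      rw [intervalIntegral.integral_mul_const, hkernel, abs_of_nonneg (by positivity)]
      apply le_of_eq; ring
    · have h2 : ¬ IntervalIntegrable (fun τ => (t - τ) ^ (q - 1) • f₂ τ) volume 0 t := by
        intro h2
        apply h1
        have h := h2.add hker_int
        simpa [smul_sub] using h
      rw [intervalIntegral.integral_undef h1, intervalIntegral.integral_undef h2]
      simpa using hRHS0
  -- main bound
  apply ciSup_le
  rintro ⟨t, ht0, htT⟩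
  rw [hφ₁, hφ₂]
  have ht : t ∈ Set.Icc (0:ℝ) T := ⟨ht0, htT⟩
  have hTq : (0:ℝ) < T ^ q := Real.rpow_pos_of_pos hT _
  have hΓq1 : Real.Gamma (q + 1) = q * Real.Gamma q := Real.Gamma_add_one hq0.ne'
  have hrearr : ((1 / Real.Gamma q) • (∫ τ in (0:ℝ)..t, (t - τ) ^ (q - 1) • f₁ τ)
      - (t / (Real.Gamma q * T)) • (∫ τ in (0:ℝ)..T, (T - τ) ^ (q - 1) • f₁ τ))
      - ((1 / Real.Gamma q) • (∫ τ in (0:ℝ)..t, (t - τ) ^ (q - 1) • f₂ τ)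
      - (t / (Real.Gamma q * T)) • (∫ τ in (0:ℝ)..T, (T - τ) ^ (q - 1) • f₂ τ))
      = (1 / Real.Gamma q) • ((∫ τ in (0:ℝ)..t, (t - τ) ^ (q - 1) • f₁ τ)
          - (∫ τ in (0:ℝ)..t, (t - τ) ^ (q - 1) • f₂ τ))
        - (t / (Real.Gamma q * T)) • ((∫ τ in (0:ℝ)..T, (T - τ) ^ (q - 1) • f₁ τ)
          - (∫ τ in (0:ℝ)..T, (T - τ) ^ (q - 1) • f₂ τ)) := by
    simp only [smul_sub]; abel
  rw [hrearr]
  have h1 : ‖(1 / Real.Gamma q) • ((∫ τ in (0:ℝ)..t, (t - τ) ^ (q - 1) • f₁ τ)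
      - (∫ τ in (0:ℝ)..t, (t - τ) ^ (q - 1) • f₂ τ))‖
      ≤ (1 / Real.Gamma q) * (L * M * T ^ q / q) := by
    rw [norm_smul, Real.norm_eq_abs, abs_of_pos (by positivity)]
    apply mul_le_mul_of_nonneg_left _ (by positivity)
    refine (key t ht).trans ?_
    have htq : t ^ q ≤ T ^ q := Real.rpow_le_rpow ht0 htT hq0.le
    gcongr
  have h2 : ‖(t / (Real.Gamma q * T)) • ((∫ τ in (0:ℝ)..T, (T - τ) ^ (q - 1) • f₁ τ)
      - (∫ τ in (0:ℝ)..T, (T - τ) ^ (q - 1) • f₂ τ))‖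
      ≤ (1 / Real.Gamma q) * (L * M * T ^ q / q) := by
    rw [norm_smul, Real.norm_eq_abs, abs_of_nonneg (by positivity)]
    have hkey : ‖(∫ τ in (0:ℝ)..T, (T - τ) ^ (q - 1) • f₁ τ)
        - (∫ τ in (0:ℝ)..T, (T - τ) ^ (q - 1) • f₂ τ)‖ ≤ L * M * T ^ q / q :=
      key T ⟨hT.le, le_refl _⟩
    have hcoef : t / (Real.Gamma q * T) ≤ 1 / Real.Gamma q := by
      rw [div_le_div_iff₀ (by positivity) hΓ]
      nlinarith [mul_le_mul_of_nonneg_right htT hΓ.le]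
    exact mul_le_mul hcoef hkey (norm_nonneg _) (by positivity)
  refine (norm_sub_le _ _).trans ((add_le_add h1 h2).trans (le_of_eq ?_))
  rw [hΓq1]
  field_simp
  ring
end

section
/- Let q ∈ (1,2], T > 0, P ≥ 0, and let Φ be the set of all functions φ : [0,T] → ℝⁿ of the form φ(t) = (1/Γ(q)) ∫₀^t (t−τ)^{q−1} f(τ) dτ − (t/(Γ(q)T)) ∫₀^T (T−τ)^{q−1} f(τ) dτ where f ranges over measurable functions with ‖f(τ)‖ ≤ P a.e. Then Φ is uniformly bounded (by 2PT^q/Γ(q+1)) and uniformly equicontinuous on [0,T]; hence Φ is relatively compact in C([0,T], ℝⁿ). -/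
open MeasureTheory Real

lemma contKer (r c : ℝ) (hr : 0 ≤ r) : Continuous fun τ : ℝ => (c - τ) ^ r := by
  apply Continuous.comp (g := fun x : ℝ => x ^ r)
  · exact continuous_iff_continuousAt.2 fun x => Real.continuousAt_rpow_const x r (Or.inr hr)
  · exact continuous_const.sub continuous_id

lemma kerInt' (q a b c : ℝ) (hq : 0 < q) :
    ∫ τ in a..b, (c - τ) ^ (q - 1) = ((c - a) ^ q - (c - b) ^ q) / q := by
  rw [intervalIntegral.integral_comp_sub_left (fun x => x ^ (q-1)) c]
  rw [integral_rpow (Or.inl (by linarith)), sub_add_cancel]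

lemma kerInt (q s t : ℝ) (hq : 0 < q) :
    ∫ τ in s..t, (t - τ) ^ (q - 1) = (t - s) ^ q / q := by
  rw [kerInt' q s t t hq, sub_self, Real.zero_rpow (by positivity), sub_zero]

section
variable {n : ℕ} {q T P : ℝ} {f : ℝ → EuclideanSpace ℝ (Fin n)}

lemma wIntble (hq : 1 < q)
    (hf : Measurable f) (hb : ∀ᵐ τ ∂(volume.restrict (Set.Icc 0 T)), ‖f τ‖ ≤ P)
    {a b c : ℝ} (ha : 0 ≤ a) (hab : a ≤ b) (hbT : b ≤ T) (hc : 0 ≤ c) (hcT : c ≤ T) :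
    IntervalIntegrable (fun τ => (c - τ) ^ (q - 1) • f τ) volume a b := by
  rw [intervalIntegrable_iff_integrableOn_Ioc_of_le hab]
  have hmeas : AEStronglyMeasurable (fun τ => (c - τ) ^ (q - 1) • f τ)
      (volume.restrict (Set.Ioc a b)) :=
    (((contKer (q-1) c (by linarith)).measurable).smul hf).aestronglyMeasurable
  apply Integrable.mono' (g := fun _ => T ^ (q-1) * P) (integrableOn_const measure_Ioc_lt_top.ne) hmeas
  have hb' : ∀ᵐ τ ∂(volume.restrict (Set.Ioc a b)), ‖f τ‖ ≤ P := by
    refine (ae_restrict_of_ae_restrict_of_subset ?_ hb)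
    intro x hx
    exact ⟨le_trans ha (le_of_lt hx.1), le_trans hx.2 hbT⟩
  filter_upwards [hb', ae_restrict_mem measurableSet_Ioc] with τ hτ hmem
  rw [norm_smul, Real.norm_eq_abs]
  have h1 : |(c - τ) ^ (q - 1)| ≤ T ^ (q - 1) := by
    refine le_trans (Real.abs_rpow_le_abs_rpow _ _) ?_
    apply Real.rpow_le_rpow (abs_nonneg _) _ (by linarith)
    rw [abs_sub_le_iff]; constructor <;> [linarith [hmem.1.le]; linarith [hmem.2]]
  exact mul_le_mul h1 hτ (norm_nonneg _) (Real.rpow_nonneg (by linarith) _)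

/-- norm bound on the piece `∫ s..t (t-τ)^(q-1) • f`. -/
lemma normPiece (hq : 1 < q) (hP : 0 ≤ P)
    (hf : Measurable f) (hb : ∀ᵐ τ ∂(volume.restrict (Set.Icc 0 T)), ‖f τ‖ ≤ P)
    {s t : ℝ} (hs : 0 ≤ s) (hst : s ≤ t) (htT : t ≤ T) :
    ‖∫ τ in s..t, (t - τ) ^ (q - 1) • f τ‖ ≤ P * (t - s) ^ q / q := by
  have hbd : ∀ᵐ τ ∂(volume.restrict (Set.uIoc s t)), ‖(t - τ) ^ (q - 1) • f τ‖ ≤ P * (t - τ) ^ (q - 1) := by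
    rw [Set.uIoc_of_le hst]
    have hb' : ∀ᵐ τ ∂(volume.restrict (Set.Ioc s t)), ‖f τ‖ ≤ P :=
      ae_restrict_of_ae_restrict_of_subset (by intro x hx; exact ⟨le_trans hs hx.1.le, le_trans hx.2 htT⟩) hb
    filter_upwards [hb', ae_restrict_mem measurableSet_Ioc] with τ hτ hmem
    have h0 : (0:ℝ) ≤ t - τ := by linarith [hmem.2]
    rw [norm_smul, Real.norm_eq_abs, abs_of_nonneg (Real.rpow_nonneg h0 _)]
    nlinarith [Real.rpow_nonneg h0 (q-1), norm_nonneg (f τ)]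
  have hgint : IntervalIntegrable (fun τ => P * (t - τ) ^ (q - 1)) volume s t :=
    (continuous_const.mul (contKer (q-1) t (by linarith))).intervalIntegrable s t
  refine le_trans (intervalIntegral.norm_integral_le_abs_of_norm_le hbd hgint) ?_
  have hts : (0:ℝ) ≤ t - s := by linarith
  rw [intervalIntegral.integral_const_mul, kerInt q s t (by linarith),
    abs_of_nonneg (mul_nonneg hP (div_nonneg (Real.rpow_nonneg hts q) (by linarith))),
    mul_div_assoc]

/-- norm bound on `∫ 0..s ((t-τ)^(q-1) - (s-τ)^(q-1)) • f`. -/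
lemma normDiffPiece (hq : 1 < q) (hP : 0 ≤ P)
    (hf : Measurable f) (hb : ∀ᵐ τ ∂(volume.restrict (Set.Icc 0 T)), ‖f τ‖ ≤ P)
    {s t : ℝ} (hs : 0 ≤ s) (hst : s ≤ t) (htT : t ≤ T) :
    ‖∫ τ in (0:ℝ)..s, ((t - τ) ^ (q - 1) - (s - τ) ^ (q - 1)) • f τ‖
      ≤ P * (t ^ q - s ^ q) / q := by
  set g : ℝ → ℝ := fun τ => P * ((t - τ) ^ (q - 1) - (s - τ) ^ (q - 1)) with hg
  have hgcont : Continuous g :=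
    continuous_const.mul ((contKer (q-1) t (by linarith)).sub (contKer (q-1) s (by linarith)))
  have hgnn : ∀ τ ∈ Set.Icc (0:ℝ) s, 0 ≤ g τ := by
    intro τ hτ
    have h1 : (s - τ) ^ (q-1) ≤ (t - τ) ^ (q-1) :=
      Real.rpow_le_rpow (by linarith [hτ.2]) (by linarith) (by linarith)
    exact mul_nonneg hP (by linarith)
  have hbd : ∀ᵐ τ ∂(volume.restrict (Set.uIoc (0:ℝ) s)),
      ‖((t - τ) ^ (q - 1) - (s - τ) ^ (q - 1)) • f τ‖ ≤ g τ := by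
    rw [Set.uIoc_of_le hs]
    have hb' : ∀ᵐ τ ∂(volume.restrict (Set.Ioc (0:ℝ) s)), ‖f τ‖ ≤ P :=
      ae_restrict_of_ae_restrict_of_subset
        (by intro x hx; exact ⟨hx.1.le, le_trans hx.2 (le_trans hst htT)⟩) hb
    filter_upwards [hb', ae_restrict_mem measurableSet_Ioc] with τ hτ hmem
    have h1 : (s - τ) ^ (q-1) ≤ (t - τ) ^ (q-1) :=
      Real.rpow_le_rpow (by linarith [hmem.2]) (by linarith) (by linarith)
    rw [norm_smul, Real.norm_eq_abs, abs_of_nonneg (by linarith)]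
    calc ((t - τ) ^ (q - 1) - (s - τ) ^ (q - 1)) * ‖f τ‖
        ≤ ((t - τ) ^ (q - 1) - (s - τ) ^ (q - 1)) * P :=
          mul_le_mul_of_nonneg_left hτ (by linarith)
      _ = g τ := by simp only [hg]; ring
  refine le_trans (intervalIntegral.norm_integral_le_abs_of_norm_le hbd
    (hgcont.intervalIntegrable 0 s)) ?_
  have hval : ∫ τ in (0:ℝ)..s, g τ
      = P * ((t ^ q - (t - s) ^ q) - s ^ q) / q := by
    rw [hg]
    rw [intervalIntegral.integral_const_mul]
    rw [intervalIntegral.integral_sub ((contKer (q-1) t (by linarith)).intervalIntegrable 0 s)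
      ((contKer (q-1) s (by linarith)).intervalIntegrable 0 s)]
    rw [kerInt' q 0 s t (by linarith), kerInt q 0 s (by linarith)]
    simp only [sub_zero]
    ring
  rw [abs_of_nonneg (intervalIntegral.integral_nonneg hs hgnn), hval]
  have h2 : (0:ℝ) ≤ (t - s) ^ q := Real.rpow_nonneg (by linarith) q
  have h3 : P * ((t ^ q - (t - s) ^ q) - s ^ q) ≤ P * (t ^ q - s ^ q) := by nlinarith
  exact div_le_div_of_nonneg_right h3 (by linarith) |>.trans_eq rfl

/-- mean value estimate for rpow. -/
lemma rpowMVT (hq : 1 < q) {s t : ℝ} (hs : 0 ≤ s) (hst : s ≤ t) (htT : t ≤ T) :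
    t ^ q - s ^ q ≤ q * T ^ (q - 1) * (t - s) := by
  have key : ∀ x ∈ Set.Icc (0:ℝ) T, HasDerivWithinAt (fun x : ℝ => x ^ q)
      (q * x ^ (q-1)) (Set.Icc (0:ℝ) T) x := by
    intro x hx
    exact (Real.hasDerivAt_rpow_const (p := q) (Or.inr hq.le)).hasDerivWithinAt
  have hbound : ∀ x ∈ Set.Icc (0:ℝ) T, ‖q * x ^ (q-1)‖ ≤ q * T ^ (q-1) := by
    intro x hx
    rw [Real.norm_eq_abs, abs_of_nonneg (mul_nonneg (by linarith) (Real.rpow_nonneg hx.1 _))]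
    exact mul_le_mul_of_nonneg_left (Real.rpow_le_rpow hx.1 hx.2 (by linarith)) (by linarith)
  have := (convex_Icc (0:ℝ) T).norm_image_sub_le_of_norm_hasDerivWithin_le key hbound
    (⟨hs, le_trans hst htT⟩ : s ∈ Set.Icc (0:ℝ) T) (⟨le_trans hs hst, htT⟩ : t ∈ Set.Icc (0:ℝ) T)
  rw [Real.norm_eq_abs, Real.norm_eq_abs] at this
  calc t ^ q - s ^ q ≤ |t ^ q - s ^ q| := le_abs_self _
    _ ≤ q * T ^ (q-1) * |t - s| := this
    _ = q * T ^ (q-1) * (t - s) := by rw [abs_of_nonneg (by linarith)]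

lemma gBound (hq : 1 < q) (hP : 0 ≤ P)
    (hf : Measurable f) (hb : ∀ᵐ τ ∂(volume.restrict (Set.Icc 0 T)), ‖f τ‖ ≤ P)
    {t : ℝ} (ht : 0 ≤ t) (htT : t ≤ T) :
    ‖∫ τ in (0:ℝ)..t, (t - τ) ^ (q - 1) • f τ‖ ≤ P * t ^ q / q := by
  simpa using normPiece hq hP hf hb le_rfl ht htT

lemma gDiff (hq : 1 < q) (hP : 0 ≤ P)
    (hf : Measurable f) (hb : ∀ᵐ τ ∂(volume.restrict (Set.Icc 0 T)), ‖f τ‖ ≤ P)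
    {s t : ℝ} (hs : 0 ≤ s) (hst : s ≤ t) (htT : t ≤ T) :
    ‖(∫ τ in (0:ℝ)..t, (t - τ) ^ (q - 1) • f τ) - ∫ τ in (0:ℝ)..s, (s - τ) ^ (q - 1) • f τ‖
      ≤ P * (t ^ q - s ^ q) / q + P * (t - s) ^ q / q := by
  have hsT : s ≤ T := le_trans hst htT
  have ht0 : 0 ≤ t := le_trans hs hst
  have hi1 : IntervalIntegrable (fun τ => (t - τ) ^ (q - 1) • f τ) volume 0 s :=
    wIntble hq hf hb le_rfl hs hsT ht0 htT
  have hi2 : IntervalIntegrable (fun τ => (t - τ) ^ (q - 1) • f τ) volume s t :=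
    wIntble hq hf hb hs hst htT ht0 htT
  have hi3 : IntervalIntegrable (fun τ => (s - τ) ^ (q - 1) • f τ) volume 0 s :=
    wIntble hq hf hb le_rfl hs hsT hs hsT
  have hsplit : (∫ τ in (0:ℝ)..t, (t - τ) ^ (q - 1) • f τ)
      = (∫ τ in (0:ℝ)..s, (t - τ) ^ (q - 1) • f τ) + ∫ τ in s..t, (t - τ) ^ (q - 1) • f τ :=
    (intervalIntegral.integral_add_adjacent_intervals hi1 hi2).symm
  have hsub : (∫ τ in (0:ℝ)..s, (t - τ) ^ (q - 1) • f τ)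
        - (∫ τ in (0:ℝ)..s, (s - τ) ^ (q - 1) • f τ)
      = ∫ τ in (0:ℝ)..s, ((t - τ) ^ (q - 1) - (s - τ) ^ (q - 1)) • f τ := by
    rw [← intervalIntegral.integral_sub hi1 hi3]
    congr 1; funext τ; rw [sub_smul]
  calc ‖(∫ τ in (0:ℝ)..t, (t - τ) ^ (q - 1) • f τ) - ∫ τ in (0:ℝ)..s, (s - τ) ^ (q - 1) • f τ‖
      = ‖(∫ τ in (0:ℝ)..s, ((t - τ) ^ (q - 1) - (s - τ) ^ (q - 1)) • f τ)
          + ∫ τ in s..t, (t - τ) ^ (q - 1) • f τ‖ := by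
        rw [hsplit, ← hsub]; congr 1; abel
    _ ≤ ‖∫ τ in (0:ℝ)..s, ((t - τ) ^ (q - 1) - (s - τ) ^ (q - 1)) • f τ‖
          + ‖∫ τ in s..t, (t - τ) ^ (q - 1) • f τ‖ := norm_add_le _ _
    _ ≤ P * (t ^ q - s ^ q) / q + P * (t - s) ^ q / q :=
        add_le_add (normDiffPiece hq hP hf hb hs hst htT) (normPiece hq hP hf hb hs hst htT)

lemma phiNorm (hq : 1 < q) (hT : 0 < T) (hP : 0 ≤ P)
    (hf : Measurable f) (hb : ∀ᵐ τ ∂(volume.restrict (Set.Icc 0 T)), ‖f τ‖ ≤ P)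
    {t : ℝ} (ht : 0 ≤ t) (htT : t ≤ T) :
    ‖(1 / Real.Gamma q) • (∫ τ in (0:ℝ)..t, (t - τ) ^ (q - 1) • f τ)
      - (t / (Real.Gamma q * T)) • (∫ τ in (0:ℝ)..T, (T - τ) ^ (q - 1) • f τ)‖
      ≤ 2 * P * T ^ q / Real.Gamma (q + 1) := by
  have hG : 0 < Real.Gamma q := Real.Gamma_pos_of_pos (by linarith)
  have h1 : ‖∫ τ in (0:ℝ)..t, (t - τ) ^ (q - 1) • f τ‖ ≤ P * T ^ q / q := by
    refine le_trans (gBound hq hP hf hb ht htT) ?_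
    have := Real.rpow_le_rpow ht htT (by linarith : (0:ℝ) ≤ q)
    have hq0 : (0:ℝ) < q := by linarith
    gcongr
  have h2 : ‖∫ τ in (0:ℝ)..T, (T - τ) ^ (q - 1) • f τ‖ ≤ P * T ^ q / q :=
    gBound hq hP hf hb hT.le le_rfl
  have hTq : (0:ℝ) ≤ T ^ q := Real.rpow_nonneg hT.le q
  have hq0 : (0:ℝ) < q := by linarith
  calc ‖(1 / Real.Gamma q) • (∫ τ in (0:ℝ)..t, (t - τ) ^ (q - 1) • f τ)
        - (t / (Real.Gamma q * T)) • (∫ τ in (0:ℝ)..T, (T - τ) ^ (q - 1) • f τ)‖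
      ≤ ‖(1 / Real.Gamma q) • (∫ τ in (0:ℝ)..t, (t - τ) ^ (q - 1) • f τ)‖
        + ‖(t / (Real.Gamma q * T)) • (∫ τ in (0:ℝ)..T, (T - τ) ^ (q - 1) • f τ)‖ :=
        norm_sub_le _ _
    _ ≤ (1 / Real.Gamma q) * (P * T ^ q / q) + (t / (Real.Gamma q * T)) * (P * T ^ q / q) := by
        rw [norm_smul, norm_smul, Real.norm_eq_abs, Real.norm_eq_abs,
          abs_of_nonneg (by positivity), abs_of_nonneg (by positivity)]
        exact add_le_add (mul_le_mul_of_nonneg_left h1 (by positivity))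
          (mul_le_mul_of_nonneg_left h2 (by positivity))
    _ ≤ (1 / Real.Gamma q) * (P * T ^ q / q) + (1 / Real.Gamma q) * (P * T ^ q / q) := by
        have hfrac : t / (Real.Gamma q * T) ≤ 1 / Real.Gamma q := by
          rw [div_le_div_iff₀ (by positivity) hG]
          nlinarith
        exact add_le_add le_rfl (mul_le_mul_of_nonneg_right hfrac
          (div_nonneg (mul_nonneg hP hTq) hq0.le))
    _ = 2 * P * T ^ q / Real.Gamma (q + 1) := by
        rw [Real.Gamma_add_one (by linarith)]
        field_simp
        ring

lemma phiDiff (hq : 1 < q) (hT : 0 < T) (hP : 0 ≤ P)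
    (hf : Measurable f) (hb : ∀ᵐ τ ∂(volume.restrict (Set.Icc 0 T)), ‖f τ‖ ≤ P)
    {s t : ℝ} (hs : 0 ≤ s) (hst : s ≤ t) (htT : t ≤ T) :
    ‖((1 / Real.Gamma q) • (∫ τ in (0:ℝ)..t, (t - τ) ^ (q - 1) • f τ)
        - (t / (Real.Gamma q * T)) • (∫ τ in (0:ℝ)..T, (T - τ) ^ (q - 1) • f τ))
      - ((1 / Real.Gamma q) • (∫ τ in (0:ℝ)..s, (s - τ) ^ (q - 1) • f τ)
        - (s / (Real.Gamma q * T)) • (∫ τ in (0:ℝ)..T, (T - τ) ^ (q - 1) • f τ))‖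
      ≤ (2 * P * T ^ (q - 1) / Real.Gamma q) * (t - s)
        + (P / Real.Gamma q) * (t - s) ^ q := by
  have hG : 0 < Real.Gamma q := Real.Gamma_pos_of_pos (by linarith)
  have hq0 : (0:ℝ) < q := by linarith
  have h2 : ‖∫ τ in (0:ℝ)..T, (T - τ) ^ (q - 1) • f τ‖ ≤ P * T ^ q / q :=
    gBound hq hP hf hb hT.le le_rfl
  have h1 := gDiff hq hP hf hb hs hst htT
  have hmvt := rpowMVT (T := T) hq hs hst htT
  have hTq1 : (0:ℝ) ≤ T ^ (q-1) := Real.rpow_nonneg hT.le _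
  have htsq : (0:ℝ) ≤ (t - s) ^ q := Real.rpow_nonneg (by linarith) q
  have hTqTq1 : T ^ q = T ^ (q - 1) * T := by
    rw [← Real.rpow_add_one hT.ne' (q-1), sub_add_cancel]
  calc ‖((1 / Real.Gamma q) • (∫ τ in (0:ℝ)..t, (t - τ) ^ (q - 1) • f τ)
        - (t / (Real.Gamma q * T)) • (∫ τ in (0:ℝ)..T, (T - τ) ^ (q - 1) • f τ))
      - ((1 / Real.Gamma q) • (∫ τ in (0:ℝ)..s, (s - τ) ^ (q - 1) • f τ)
        - (s / (Real.Gamma q * T)) • (∫ τ in (0:ℝ)..T, (T - τ) ^ (q - 1) • f τ))‖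
      = ‖(1 / Real.Gamma q) • ((∫ τ in (0:ℝ)..t, (t - τ) ^ (q - 1) • f τ)
            - ∫ τ in (0:ℝ)..s, (s - τ) ^ (q - 1) • f τ)
          - ((t - s) / (Real.Gamma q * T)) • (∫ τ in (0:ℝ)..T, (T - τ) ^ (q - 1) • f τ)‖ := by
        congr 1
        rw [smul_sub, sub_div, sub_smul]
        abel
    _ ≤ (1 / Real.Gamma q) * (P * (t ^ q - s ^ q) / q + P * (t - s) ^ q / q)
        + ((t - s) / (Real.Gamma q * T)) * (P * T ^ q / q) := by
        have hd0 : 0 ≤ (t - s) / (Real.Gamma q * T) :=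
          div_nonneg (by linarith) (by positivity)
        refine le_trans (norm_sub_le _ _) (add_le_add ?_ ?_)
        · rw [norm_smul, Real.norm_eq_abs, abs_of_nonneg (by positivity)]
          exact mul_le_mul_of_nonneg_left h1 (by positivity)
        · rw [norm_smul, Real.norm_eq_abs, abs_of_nonneg hd0]
          exact mul_le_mul_of_nonneg_left h2 hd0
    _ ≤ (2 * P * T ^ (q - 1) / Real.Gamma q) * (t - s)
        + (P / Real.Gamma q) * (t - s) ^ q := by
        rw [hTqTq1]
        have e1 : P * (t ^ q - s ^ q) / q ≤ P * T ^ (q-1) * (t - s) := by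
          rw [div_le_iff₀ hq0]
          nlinarith [mul_le_mul_of_nonneg_left hmvt hP]
        have e2 : P * (t - s) ^ q / q ≤ P * (t - s) ^ q := by
          rw [div_le_iff₀ hq0]
          nlinarith [mul_nonneg hP htsq]
        have e3 : (t - s) / (Real.Gamma q * T) * (P * (T ^ (q-1) * T) / q)
            ≤ P * T ^ (q-1) * (t - s) / Real.Gamma q := by
          rw [div_mul_eq_mul_div, div_le_div_iff₀ (by positivity) hG]
          have hX : (0:ℝ) ≤ P * T ^ (q-1) * (t - s) * (Real.Gamma q * T) :=
            mul_nonneg (mul_nonneg (mul_nonneg hP hTq1) (by linarith)) (by positivity)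
          calc (t - s) * (P * (T ^ (q-1) * T) / q) * Real.Gamma q
              = P * T ^ (q-1) * (t - s) * (Real.Gamma q * T) / q := by ring
            _ ≤ P * T ^ (q-1) * (t - s) * (Real.Gamma q * T) := div_le_self hX (by linarith)
        calc (1 / Real.Gamma q) * (P * (t ^ q - s ^ q) / q + P * (t - s) ^ q / q)
              + (t - s) / (Real.Gamma q * T) * (P * (T ^ (q-1) * T) / q)
            ≤ (1 / Real.Gamma q) * (P * T ^ (q-1) * (t - s) + P * (t - s) ^ q)
              + P * T ^ (q-1) * (t - s) / Real.Gamma q :=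
              add_le_add (mul_le_mul_of_nonneg_left (add_le_add e1 e2) (by positivity)) e3
          _ = (2 * P * T ^ (q-1) / Real.Gamma q) * (t - s) + (P / Real.Gamma q) * (t - s) ^ q := by
              field_simp
              ring

lemma modulusDelta (C₁ C₂ q ε : ℝ) (hq : 1 ≤ q) (hC₁ : 0 ≤ C₁) (hC₂ : 0 ≤ C₂) (hε : 0 < ε) :
    ∃ δ > 0, ∀ d : ℝ, 0 ≤ d → d < δ → C₁ * d + C₂ * d ^ q < ε := by
  refine ⟨min 1 (ε / (C₁ + C₂ + 1)), lt_min one_pos (by positivity), fun d hd hdlt => ?_⟩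
  have hd1 : d ≤ 1 := le_of_lt (lt_of_lt_of_le hdlt (min_le_left _ _))
  have hdq : d ^ q ≤ d := by
    rcases eq_or_lt_of_le hd with h | h
    · rw [← h, Real.zero_rpow (by linarith)]
    · calc d ^ q ≤ d ^ (1:ℝ) := Real.rpow_le_rpow_of_exponent_ge h hd1 hq
        _ = d := Real.rpow_one d
  have h2 : d < ε / (C₁ + C₂ + 1) := lt_of_lt_of_le hdlt (min_le_right _ _)
  calc C₁ * d + C₂ * d ^ q ≤ (C₁ + C₂ + 1) * d := by nlinarith
    _ < (C₁ + C₂ + 1) * (ε / (C₁ + C₂ + 1)) := mul_lt_mul_of_pos_left h2 (by positivity)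
    _ = ε := by field_simp

lemma equicontinuous_of_modulus {X E ι : Type*} [PseudoMetricSpace X] [PseudoMetricSpace E]
    (F : ι → X → E) (C₁ C₂ q : ℝ) (hq : 1 ≤ q) (hC₁ : 0 ≤ C₁) (hC₂ : 0 ≤ C₂)
    (h : ∀ i s t, dist (F i s) (F i t) ≤ C₁ * dist s t + C₂ * dist s t ^ q) :
    Equicontinuous F := by
  intro x
  rw [Metric.equicontinuousAt_iff]
  intro ε hε
  obtain ⟨δ, hδ, hmod⟩ := modulusDelta C₁ C₂ q ε hq hC₁ hC₂ hε
  refine ⟨δ, hδ, fun y hy i => lt_of_le_of_lt (h i x y) (hmod _ dist_nonneg ?_)⟩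
  rwa [dist_comm] at hy

lemma continuous_of_modulus {X E : Type*} [PseudoMetricSpace X] [PseudoMetricSpace E]
    (g : X → E) (C₁ C₂ q : ℝ) (hq : 1 ≤ q) (hC₁ : 0 ≤ C₁) (hC₂ : 0 ≤ C₂)
    (h : ∀ s t, dist (g s) (g t) ≤ C₁ * dist s t + C₂ * dist s t ^ q) :
    Continuous g :=
  (equicontinuous_of_modulus (fun _ : Unit => g) C₁ C₂ q hq hC₁ hC₂ (fun _ => h)).continuous ()

theorem stmt_12 {n : ℕ} (q T P : ℝ) (hq1 : 1 < q) (hq2 : q ≤ 2) (hT : 0 < T) (hP : 0 ≤ P)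
    (Φ : Set C(Set.Icc (0:ℝ) T, EuclideanSpace ℝ (Fin n)))
    (hΦ : Φ = {φ | ∃ f : ℝ → EuclideanSpace ℝ (Fin n), Measurable f ∧
      (∀ᵐ τ ∂(volume.restrict (Set.Icc 0 T)), ‖f τ‖ ≤ P) ∧
      ∀ t : Set.Icc (0:ℝ) T,
        φ t = (1 / Real.Gamma q) • (∫ τ in (0:ℝ)..(t:ℝ), ((t:ℝ) - τ) ^ (q - 1) • f τ)
          - ((t:ℝ) / (Real.Gamma q * T)) • (∫ τ in (0:ℝ)..T, (T - τ) ^ (q - 1) • f τ)}) :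
    (∀ φ ∈ Φ, ∀ t : Set.Icc (0:ℝ) T, ‖φ t‖ ≤ 2 * P * T ^ q / Real.Gamma (q + 1)) ∧
    Equicontinuous (fun φ : Φ => ((φ : C(Set.Icc (0:ℝ) T, EuclideanSpace ℝ (Fin n))) :
      Set.Icc (0:ℝ) T → EuclideanSpace ℝ (Fin n))) ∧
    IsCompact (closure Φ) := by
  have hG : 0 < Real.Gamma q := Real.Gamma_pos_of_pos (by linarith)
  let X := Set.Icc (0:ℝ) T
  let E := EuclideanSpace ℝ (Fin n)
  set M : ℝ := 2 * P * T ^ q / Real.Gamma (q + 1) with hM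
  set C₁ : ℝ := 2 * P * T ^ (q - 1) / Real.Gamma q with hC₁def
  set C₂ : ℝ := P / Real.Gamma q with hC₂def
  have hC₁ : 0 ≤ C₁ :=
    div_nonneg (mul_nonneg (by linarith) (Real.rpow_nonneg hT.le _)) hG.le
  have hC₂ : 0 ≤ C₂ := div_nonneg hP hG.le
  set S : Set C(X, E) := {ψ | (∀ x : X, ‖ψ x‖ ≤ M) ∧
    ∀ x y : X, dist (ψ x) (ψ y) ≤ C₁ * dist x y + C₂ * dist x y ^ q} with hS
  -- Φ ⊆ S
  have hΦS : Φ ⊆ S := by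
    intro φ hφ
    rw [hΦ] at hφ
    obtain ⟨f, hf, hb, heq⟩ := hφ
    constructor
    · intro x
      rw [heq x]
      exact phiNorm hq1 hT hP hf hb x.2.1 x.2.2
    · have key : ∀ x y : X, (y:ℝ) ≤ (x:ℝ) →
          dist (φ x) (φ y) ≤ C₁ * dist x y + C₂ * dist x y ^ q := by
        intro x y hyx
        have hd : dist x y = (x:ℝ) - (y:ℝ) := by
          rw [Subtype.dist_eq, Real.dist_eq, abs_of_nonneg (by linarith)]
        rw [dist_eq_norm, heq x, heq y, hd]
        exact phiDiff hq1 hT hP hf hb y.2.1 hyx x.2.2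
      intro x y
      rcases le_total (y:ℝ) (x:ℝ) with h | h
      · exact key x y h
      · rw [dist_comm, dist_comm (x:X) y]
        exact key y x h
  -- S is equicontinuous
  have hSequi : Equicontinuous ((↑) : S → X → E) :=
    equicontinuous_of_modulus _ C₁ C₂ q hq1.le hC₁ hC₂ (fun ψ x y => ψ.2.2 x y)
  -- the image of S under toFun is a closed pointwise-bounded set
  have hA : ContinuousMap.toFun '' S = {g : X → E | (∀ x : X, ‖g x‖ ≤ M) ∧
      ∀ x y : X, dist (g x) (g y) ≤ C₁ * dist x y + C₂ * dist x y ^ q} := by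
    ext g
    constructor
    · rintro ⟨ψ, hψ, rfl⟩
      exact hψ
    · rintro ⟨h1, h2⟩
      exact ⟨⟨g, continuous_of_modulus g C₁ C₂ q hq1.le hC₁ hC₂ h2⟩, ⟨h1, h2⟩, rfl⟩
  have hAc1 : IsClosed {g : X → E | ∀ x : X, ‖g x‖ ≤ M} := by
    rw [Set.setOf_forall]
    exact isClosed_iInter fun x =>
      isClosed_le ((continuous_apply x).norm) continuous_const
  have hAc2 : IsClosed {g : X → E |
      ∀ x y : X, dist (g x) (g y) ≤ C₁ * dist x y + C₂ * dist x y ^ q} := by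
    rw [Set.setOf_forall]
    refine isClosed_iInter fun x => ?_
    rw [Set.setOf_forall]
    exact isClosed_iInter fun y =>
      isClosed_le ((continuous_apply x).dist (continuous_apply y)) continuous_const
  have hAclosed : IsClosed {g : X → E | (∀ x : X, ‖g x‖ ≤ M) ∧
      ∀ x y : X, dist (g x) (g y) ≤ C₁ * dist x y + C₂ * dist x y ^ q} :=
    hAc1.inter hAc2
  have hAcompact : IsCompact {g : X → E | (∀ x : X, ‖g x‖ ≤ M) ∧
      ∀ x y : X, dist (g x) (g y) ≤ C₁ * dist x y + C₂ * dist x y ^ q} := by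
    refine IsCompact.of_isClosed_subset
      (isCompact_univ_pi fun _ : X => isCompact_closedBall (0:E) M) hAclosed ?_
    intro g hg x _
    rw [Metric.mem_closedBall, dist_zero_right]
    exact hg.1 x
  have hScompact : IsCompact S :=
    ArzelaAscoli.isCompact_of_equicontinuous S (hA ▸ hAcompact) hSequi
  refine ⟨fun φ hφ t => (hΦS hφ).1 t, ?_, ?_⟩
  · exact hSequi.comp (Set.inclusion hΦS)
  · exact IsCompact.of_isClosed_subset hScompact isClosed_closure
      (closure_minimal hΦS hScompact.isClosed)
end
end

section
/- Let K ⊆ ℝᵐ be nonempty, closed and convex, S : ℝᵐ → ℝᵐ continuous and monotone on K, and suppose there exists u₀ ∈ K with liminf_{u ∈ K, ‖u‖→∞} ⟨S(u), u − u₀⟩/‖u‖² > 0. Then for every b ∈ ℝᵐ the solution set of the variational inequality, {u ∈ K : ⟨b + S(u), v − u⟩ ≥ 0 for all v ∈ K}, is nonempty, convex, and compact. -/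
open Filter

/-- Finite feasibility step of the Minty/KKM argument, proved via Hahn-Banach separation. -/
lemma vi_finite_feasible {E : Type*} [NormedAddCommGroup E] [InnerProductSpace ℝ E]
    {C : Set E} (hCne : C.Nonempty) (hCc : IsCompact C) (hCv : Convex ℝ C)
    {F : E → E}
    (hmono : ∀ u ∈ C, ∀ v ∈ C, 0 ≤ (inner ℝ (F u - F v) (u - v) : ℝ))
    (t : Finset E) (ht : ∀ v ∈ t, v ∈ C) :
    ∃ u ∈ C, ∀ v ∈ t, 0 ≤ (inner ℝ (F v) (v - u) : ℝ) := by
  classical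
  by_contra hcon
  push_neg at hcon
  set ι := {x // x ∈ t}
  set E' := EuclideanSpace ℝ ι
  set g : E → E' := fun u => WithLp.toLp 2 (fun i : ι => (inner ℝ (F i.1) (i.1 - u) : ℝ)) with hg
  set D : Set E' := g '' C with hD
  set Q : Set E' := {y : E' | ∀ i : ι, 0 ≤ y i} with hQ
  -- g sends convex combinations to convex combinations
  have hgaff : ∀ (x y : E) (a b : ℝ), a + b = 1 → g (a • x + b • y) = a • g x + b • g y := by
    intro x y a b hab
    ext i
    have h1 : (i.1 : E) - (a • x + b • y) = a • (i.1 - x) + b • (i.1 - y) := by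
      have : a • (i.1 : E) + b • i.1 = i.1 := by rw [← add_smul, hab, one_smul]
      rw [smul_sub, smul_sub, ← add_sub_add_comm, this]
    show (inner ℝ (F i.1) (i.1 - (a • x + b • y)) : ℝ) = _
    rw [h1, inner_add_right, real_inner_smul_right, real_inner_smul_right]
    rfl
  have hDconv : Convex ℝ D := by
    rintro d ⟨x, hx, rfl⟩ e ⟨y, hy, rfl⟩ a b ha hb hab
    exact ⟨a • x + b • y, hCv hx hy ha hb hab, hgaff x y a b hab⟩
  have hgcont : Continuous g := by
    have h0 : Continuous (fun u : E => (fun i : ι => (inner ℝ (F i.1) (i.1 - u) : ℝ))) := by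
      refine continuous_pi fun i => ?_
      exact Continuous.inner continuous_const (continuous_const.sub continuous_id)
    exact ((PiLp.continuousLinearEquiv 2 ℝ (fun _ : ι => ℝ)).symm).continuous.comp h0
  have hDcomp : IsCompact D := hCc.image hgcont
  have hQclosed : IsClosed Q := by
    have : Q = ⋂ i : ι, {y : E' | 0 ≤ y i} := by
      ext y; simp [Q, Set.mem_iInter]
    rw [this]
    refine isClosed_iInter fun i => isClosed_le continuous_const ?_
    exact (continuous_apply i).comp (PiLp.continuousLinearEquiv 2 ℝ (fun _ : ι => ℝ)).continuous
  have hQconv : Convex ℝ Q := by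
    intro y hy z hz a b ha hb _
    intro i
    have h : (a • y + b • z) i = a * y i + b * z i := rfl
    rw [h]
    exact add_nonneg (mul_nonneg ha (hy i)) (mul_nonneg hb (hz i))
  have hdisj : Disjoint D Q := by
    rw [Set.disjoint_left]
    rintro d ⟨x, hx, rfl⟩ hdQ
    obtain ⟨v, hv, hneg⟩ := hcon x hx
    exact absurd (hdQ ⟨v, hv⟩) (not_le.mpr hneg)
  obtain ⟨f, α, β, hfD, hαβ, hfQ⟩ :=
    geometric_hahn_banach_compact_closed hDconv hDcomp hQconv hQclosed hdisj
  set lam : ι → ℝ := fun i => f (EuclideanSpace.single i (1:ℝ)) with hlam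
  have hβ0 : β < 0 := by
    have h0Q : (0 : E') ∈ Q := fun i => le_rfl
    have := hfQ 0 h0Q
    simpa using this
  have hlamnn : ∀ i, 0 ≤ lam i := by
    intro i
    by_contra h
    push_neg at h
    have hr : (0:ℝ) < β / lam i := div_pos_of_neg_of_neg hβ0 h
    have hmem : (β / lam i) • EuclideanSpace.single i (1:ℝ) ∈ Q := by
      intro j
      have : ((β / lam i) • EuclideanSpace.single i (1:ℝ)) j
          = (β / lam i) * (EuclideanSpace.single i (1:ℝ)) j := by
        simp [PiLp.smul_apply, smul_eq_mul]
      rw [this, EuclideanSpace.single_apply]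
      by_cases hj : j = i <;> simp [hj] <;> positivity
    have h5 := hfQ _ hmem
    rw [map_smul, smul_eq_mul] at h5
    have h6 : β < β / lam i * lam i := h5
    rw [div_mul_cancel₀ _ (ne_of_lt h)] at h6
    exact lt_irrefl β h6
  have hdec : ∀ y : E', f y = ∑ i : ι, y i * lam i := by
    intro y
    conv_lhs => rw [← (EuclideanSpace.basisFun ι ℝ).sum_repr y]
    rw [map_sum]
    refine Finset.sum_congr rfl fun i _ => ?_
    rw [EuclideanSpace.basisFun_repr, map_smul, smul_eq_mul, EuclideanSpace.basisFun_apply]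
  have hkey : ∀ x ∈ C, ∑ i : ι, (inner ℝ (F i.1) (i.1 - x) : ℝ) * lam i < 0 := by
    intro x hx
    have h1 : f (g x) < α := hfD (g x) ⟨x, hx, rfl⟩
    have h2 := hdec (g x)
    have : ∑ i : ι, (g x) i * lam i < 0 := by
      rw [← h2]; exact h1.trans (hαβ.trans hβ0)
    exact this
  set L : ℝ := ∑ i : ι, lam i with hL
  have hLnn : 0 ≤ L := Finset.sum_nonneg fun i _ => hlamnn i
  have hLpos : 0 < L := by
    rcases lt_or_eq_of_le hLnn with h | h
    · exact h
    · exfalso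
      obtain ⟨x₀, hx₀⟩ := hCne
      have hall : ∀ i ∈ Finset.univ (α := ι), lam i = 0 := by
        rw [← Finset.sum_eq_zero_iff_of_nonneg (fun i _ => hlamnn i)]
        exact h.symm
      have := hkey x₀ hx₀
      rw [Finset.sum_congr rfl (fun i _ => by rw [hall i (Finset.mem_univ i), mul_zero])] at this
      simp at this
  set ub : E := ∑ i : ι, (lam i / L) • (i.1 : E) with hub
  have hubC : ub ∈ C := by
    refine hCv.sum_mem (fun i _ => div_nonneg (hlamnn i) hLnn) ?_ (fun i _ => ht i.1 i.2)
    rw [← Finset.sum_div, ← hL, div_self (ne_of_gt hLpos)]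
  -- the two evaluations at ub
  have hzero : ∑ i : ι, lam i * (inner ℝ (F ub) (i.1 - ub) : ℝ) = 0 := by
    have h1 : ∑ i : ι, lam i * (inner ℝ (F ub) (i.1 - ub) : ℝ)
        = (inner ℝ (F ub) (∑ i : ι, lam i • (i.1 - ub)) : ℝ) := by
      rw [inner_sum]
      exact Finset.sum_congr rfl fun i _ => (real_inner_smul_right _ _ _).symm
    have h2 : ∑ i : ι, lam i • ((i.1 : E) - ub) = 0 := by
      have h3 : ∑ i : ι, lam i • ((i.1 : E) - ub)
          = (∑ i : ι, lam i • (i.1 : E)) - L • ub := by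
        simp only [smul_sub]
        rw [Finset.sum_sub_distrib, ← Finset.sum_smul, ← hL]
      have h4 : L • ub = ∑ i : ι, lam i • (i.1 : E) := by
        rw [hub, Finset.smul_sum]
        refine Finset.sum_congr rfl fun i _ => ?_
        rw [smul_smul, mul_div_cancel₀ _ (ne_of_gt hLpos)]
      rw [h3, h4, sub_self]
    rw [h1, h2, inner_zero_right]
  have hle : ∑ i : ι, lam i * (inner ℝ (F ub) (i.1 - ub) : ℝ)
      ≤ ∑ i : ι, lam i * (inner ℝ (F i.1) (i.1 - ub) : ℝ) := by
    refine Finset.sum_le_sum fun i _ => ?_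
    refine mul_le_mul_of_nonneg_left ?_ (hlamnn i)
    have := hmono i.1 (ht i.1 i.2) ub hubC
    rw [inner_sub_left] at this
    linarith
  have hlt := hkey ub hubC
  rw [Finset.sum_congr rfl (fun i _ => mul_comm (inner ℝ (F i.1) (i.1 - ub) : ℝ) (lam i))] at hlt
  linarith [hzero, hle, hlt]

/-- Existence of a Minty solution on a nonempty compact convex set. -/
lemma vi_minty_exists {E : Type*} [NormedAddCommGroup E] [InnerProductSpace ℝ E]
    {C : Set E} (hCne : C.Nonempty) (hCc : IsCompact C) (hCv : Convex ℝ C)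
    {F : E → E}
    (hmono : ∀ u ∈ C, ∀ v ∈ C, 0 ≤ (inner ℝ (F u - F v) (u - v) : ℝ)) :
    ∃ u ∈ C, ∀ v ∈ C, 0 ≤ (inner ℝ (F v) (v - u) : ℝ) := by
  classical
  set T : C → Set E := fun v => {u : E | 0 ≤ (inner ℝ (F v.1) (v.1 - u) : ℝ)} with hT
  have hTc : ∀ v : C, IsClosed (T v) :=
    fun v => isClosed_le continuous_const
      (Continuous.inner continuous_const (continuous_const.sub continuous_id))
  have hfin : ∀ s : Finset C, (C ∩ ⋂ v ∈ s, T v).Nonempty := by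
    intro s
    obtain ⟨u, huC, hu⟩ := vi_finite_feasible hCne hCc hCv hmono
      (s.image Subtype.val) (by intro v hv; obtain ⟨w, _, rfl⟩ := Finset.mem_image.mp hv; exact w.2)
    refine ⟨u, huC, ?_⟩
    rw [Set.mem_iInter₂]
    intro v hv
    exact hu v.1 (Finset.mem_image_of_mem _ hv)
  obtain ⟨u, huC, hu⟩ := hCc.inter_iInter_nonempty T hTc hfin
  rw [Set.mem_iInter] at hu
  exact ⟨u, huC, fun v hv => hu ⟨v, hv⟩⟩

/-- From a Minty solution to a Stampacchia solution, on a convex set. -/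
lemma vi_minty_to_stampacchia {E : Type*} [NormedAddCommGroup E] [InnerProductSpace ℝ E]
    {C : Set E} (hCv : Convex ℝ C) {F : E → E} (hF : Continuous F)
    {u : E} (hu : u ∈ C) (hmin : ∀ w ∈ C, 0 ≤ (inner ℝ (F w) (w - u) : ℝ)) :
    ∀ v ∈ C, 0 ≤ (inner ℝ (F u) (v - u) : ℝ) := by
  intro v hv
  set φ : ℝ → ℝ := fun s => (inner ℝ (F (u + s • (v - u))) (v - u) : ℝ) with hφ
  have hφc : Continuous φ := by
    refine Continuous.inner (hF.comp ?_) continuous_const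
    exact continuous_const.add (continuous_id.smul continuous_const)
  have hφ0 : φ 0 = (inner ℝ (F u) (v - u) : ℝ) := by simp [φ]
  have hpos : ∀ s ∈ Set.Ioc (0:ℝ) 1, 0 ≤ φ s := by
    intro s hs
    have hwC : u + s • (v - u) ∈ C := by
      have h1 : u + s • (v - u) = (1 - s) • u + s • v := by
        rw [smul_sub]; module
      rw [h1]
      exact hCv hu hv (by linarith [hs.2]) (le_of_lt hs.1) (by ring)
    have h2 := hmin _ hwC
    rw [add_sub_cancel_left, real_inner_smul_right] at h2
    exact nonneg_of_mul_nonneg_right h2 hs.1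
  have htend : Filter.Tendsto φ (nhdsWithin 0 (Set.Ioi 0)) (nhds (φ 0)) :=
    (hφc.tendsto 0).mono_left nhdsWithin_le_nhds
  have hev : ∀ᶠ s in nhdsWithin 0 (Set.Ioi 0), 0 ≤ φ s := by
    filter_upwards [Ioc_mem_nhdsGT_of_mem (Set.mem_Ico.mpr ⟨le_refl 0, zero_lt_one⟩)] with s hs
    exact hpos s hs
  rw [← hφ0]
  exact ge_of_tendsto htend hev

theorem stmt_19 {m : ℕ} (K : Set (EuclideanSpace ℝ (Fin m)))
    (hne : K.Nonempty) (hcl : IsClosed K) (hconv : Convex ℝ K)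
    (S : EuclideanSpace ℝ (Fin m) → EuclideanSpace ℝ (Fin m)) (hS : Continuous S)
    (hmono : ∀ u ∈ K, ∀ v ∈ K, (inner ℝ (S u - S v) (u - v) : ℝ) ≥ 0)
    (u₀ : EuclideanSpace ℝ (Fin m)) (hu₀ : u₀ ∈ K)
    (hcoer : 0 < Filter.liminf
      (fun u : EuclideanSpace ℝ (Fin m) => (inner ℝ (S u) (u - u₀) : ℝ) / ‖u‖ ^ 2)
      ((Filter.comap (fun u : EuclideanSpace ℝ (Fin m) => ‖u‖) Filter.atTop)
        ⊓ Filter.principal K)) :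
    ∀ b : EuclideanSpace ℝ (Fin m),
      ({u ∈ K | ∀ v ∈ K, (inner ℝ (b + S u) (v - u) : ℝ) ≥ 0}).Nonempty ∧
      Convex ℝ {u ∈ K | ∀ v ∈ K, (inner ℝ (b + S u) (v - u) : ℝ) ≥ 0} ∧
      IsCompact {u ∈ K | ∀ v ∈ K, (inner ℝ (b + S u) (v - u) : ℝ) ≥ 0} := by
  intro b
  -- Extract concrete coercivity from the liminf hypothesis
  obtain ⟨c, hc, R₀, hR₀1, hcoer'⟩ : ∃ c > (0:ℝ), ∃ R₀ : ℝ, 1 ≤ R₀ ∧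
      ∀ u ∈ K, R₀ ≤ ‖u‖ → c * ‖u‖ ^ 2 ≤ (inner ℝ (S u) (u - u₀) : ℝ) := by
    rw [Filter.liminf_eq] at hcoer
    set A : Set ℝ := {a : ℝ | ∀ᶠ u in
        (Filter.comap (fun u : EuclideanSpace ℝ (Fin m) => ‖u‖) Filter.atTop) ⊓ Filter.principal K,
        a ≤ (inner ℝ (S u) (u - u₀) : ℝ) / ‖u‖ ^ 2} with hA
    have hAne : A.Nonempty := by
      by_contra h
      rw [Set.not_nonempty_iff_eq_empty] at h
      rw [h, Real.sSup_empty] at hcoer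
      exact lt_irrefl 0 hcoer
    obtain ⟨c, hcA, hc⟩ := exists_lt_of_lt_csSup hAne hcoer
    rw [hA, Set.mem_setOf_eq, Filter.eventually_inf_principal, Filter.eventually_comap,
      Filter.eventually_atTop] at hcA
    obtain ⟨R₀, hR₀⟩ := hcA
    refine ⟨c, hc, max R₀ 1, le_max_right _ _, ?_⟩
    intro u hu hRu
    have h1 := hR₀ ‖u‖ (le_trans (le_max_left _ _) hRu) u rfl hu
    have hnu : (0:ℝ) < ‖u‖ := lt_of_lt_of_le zero_lt_one (le_trans (le_max_right _ _) hRu)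
    have hsq : (0:ℝ) < ‖u‖ ^ 2 := by positivity
    calc c * ‖u‖ ^ 2 ≤ ((inner ℝ (S u) (u - u₀) : ℝ) / ‖u‖ ^ 2) * ‖u‖ ^ 2 :=
          mul_le_mul_of_nonneg_right h1 (le_of_lt hsq)
      _ = (inner ℝ (S u) (u - u₀) : ℝ) := div_mul_cancel₀ _ (ne_of_gt hsq)
  -- Choose the radius R
  set R : ℝ := max (max R₀ ‖u₀‖) ((2 * ‖b‖ + 1) / c) with hR
  have hRR₀ : R₀ ≤ R := le_trans (le_max_left _ _) (le_max_left _ _)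
  have hR1 : 1 ≤ R := le_trans hR₀1 hRR₀
  have hRu₀ : ‖u₀‖ ≤ R := le_trans (le_max_right _ _) (le_max_left _ _)
  have hcR : 2 * ‖b‖ + 1 ≤ c * R := by
    have h1 : (2 * ‖b‖ + 1) / c ≤ R := le_max_right _ _
    calc 2 * ‖b‖ + 1 = c * ((2 * ‖b‖ + 1) / c) := (mul_div_cancel₀ _ (ne_of_gt hc)).symm
      _ ≤ c * R := mul_le_mul_of_nonneg_left h1 (le_of_lt hc)
  -- Any point of K satisfying the VI inequality at v = u₀ has norm < R
  have hbound : ∀ u ∈ K, 0 ≤ (inner ℝ (b + S u) (u₀ - u) : ℝ) → ‖u‖ < R := by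
    intro u huK hineq
    by_contra h
    push_neg at h
    have hnu : (0:ℝ) < ‖u‖ := lt_of_lt_of_le zero_lt_one (le_trans hR1 h)
    have h1 : c * ‖u‖ ^ 2 ≤ (inner ℝ (S u) (u - u₀) : ℝ) :=
      hcoer' u huK (le_trans hRR₀ h)
    have h2 : (inner ℝ (S u) (u - u₀) : ℝ) ≤ 2 * ‖b‖ * ‖u‖ := by
      rw [inner_add_left] at hineq
      have h3 : (inner ℝ (S u) (u₀ - u) : ℝ) = -(inner ℝ (S u) (u - u₀) : ℝ) := by
        rw [← inner_neg_right, neg_sub]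
      have h4 : (inner ℝ (S u) (u - u₀) : ℝ) ≤ (inner ℝ b (u₀ - u) : ℝ) := by linarith
      calc (inner ℝ (S u) (u - u₀) : ℝ) ≤ (inner ℝ b (u₀ - u) : ℝ) := h4
        _ ≤ ‖b‖ * ‖u₀ - u‖ := real_inner_le_norm _ _
        _ ≤ ‖b‖ * (‖u₀‖ + ‖u‖) := by
            refine mul_le_mul_of_nonneg_left ?_ (norm_nonneg b)
            exact le_trans (norm_sub_le _ _) (by rfl)
        _ ≤ ‖b‖ * (‖u‖ + ‖u‖) := by
            refine mul_le_mul_of_nonneg_left ?_ (norm_nonneg b)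
            have := le_trans hRu₀ h
            linarith
        _ = 2 * ‖b‖ * ‖u‖ := by ring
    have h5 : c * ‖u‖ ≤ 2 * ‖b‖ := by
      have h6 : c * ‖u‖ * ‖u‖ ≤ 2 * ‖b‖ * ‖u‖ := by
        calc c * ‖u‖ * ‖u‖ = c * ‖u‖ ^ 2 := by ring
          _ ≤ 2 * ‖b‖ * ‖u‖ := le_trans h1 h2
      exact le_of_mul_le_mul_right h6 hnu
    have h7 : c * R ≤ c * ‖u‖ := mul_le_mul_of_nonneg_left h (le_of_lt hc)
    linarith
  -- The truncated set
  set C : Set (EuclideanSpace ℝ (Fin m)) := K ∩ Metric.closedBall 0 R with hC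
  have hCne : C.Nonempty := ⟨u₀, hu₀, by
    rw [Metric.mem_closedBall, dist_zero_right]; exact hRu₀⟩
  have hCc : IsCompact C := (isCompact_closedBall (0:EuclideanSpace ℝ (Fin m)) R).inter_left hcl
  have hCv : Convex ℝ C := hconv.inter (convex_closedBall 0 R)
  set F : EuclideanSpace ℝ (Fin m) → EuclideanSpace ℝ (Fin m) := fun u => b + S u with hF
  have hFc : Continuous F := continuous_const.add hS
  have hFmono : ∀ u ∈ K, ∀ v ∈ K, 0 ≤ (inner ℝ (F u - F v) (u - v) : ℝ) := by
    intro u hu v hv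
    have : F u - F v = S u - S v := by rw [hF]; simp
    rw [this]
    exact hmono u hu v hv
  -- Existence of a solution on C, hence on K
  obtain ⟨u, huC, humin⟩ := vi_minty_exists hCne hCc hCv
    (fun x hx y hy => hFmono x hx.1 y hy.1)
  have hust : ∀ v ∈ C, 0 ≤ (inner ℝ (F u) (v - u) : ℝ) :=
    vi_minty_to_stampacchia hCv hFc huC humin
  have hunorm : ‖u‖ < R := by
    refine hbound u huC.1 ?_
    exact hust u₀ ⟨hu₀, by rw [Metric.mem_closedBall, dist_zero_right]; exact hRu₀⟩
  have huK : ∀ v ∈ K, 0 ≤ (inner ℝ (F u) (v - u) : ℝ) := by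
    intro v hv
    by_cases hvR : ‖v‖ ≤ R
    · exact hust v ⟨hv, by rw [Metric.mem_closedBall, dist_zero_right]; exact hvR⟩
    · push_neg at hvR
      have hvu : v ≠ u := by
        intro h; rw [h] at hvR; exact absurd hunorm (not_lt.mpr (le_of_lt hvR))
      have hnvu : (0:ℝ) < ‖v - u‖ := by
        rw [norm_pos_iff]; exact sub_ne_zero_of_ne hvu
      set s : ℝ := min 1 ((R - ‖u‖) / ‖v - u‖) with hs
      have hs0 : 0 < s := lt_min zero_lt_one (div_pos (by linarith) hnvu)
      have hs1 : s ≤ 1 := min_le_left _ _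
      have hw : u + s • (v - u) ∈ C := by
        constructor
        · have h1 : u + s • (v - u) = (1 - s) • u + s • v := by
            rw [smul_sub]; module
          rw [h1]
          exact hconv huC.1 hv (by linarith) (le_of_lt hs0) (by ring)
        · rw [Metric.mem_closedBall, dist_zero_right]
          calc ‖u + s • (v - u)‖ ≤ ‖u‖ + ‖s • (v - u)‖ := norm_add_le _ _
            _ = ‖u‖ + s * ‖v - u‖ := by rw [norm_smul, Real.norm_eq_abs, abs_of_pos hs0]
            _ ≤ ‖u‖ + ((R - ‖u‖) / ‖v - u‖) * ‖v - u‖ := by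
                refine add_le_add_right (mul_le_mul_of_nonneg_right (min_le_right _ _)
                  (le_of_lt hnvu)) _
            _ = R := by rw [div_mul_cancel₀ _ (ne_of_gt hnvu)]; ring
      have h2 := hust _ hw
      rw [add_sub_cancel_left, real_inner_smul_right] at h2
      exact nonneg_of_mul_nonneg_right h2 hs0
  -- The solution set
  set Sol : Set (EuclideanSpace ℝ (Fin m)) := {u ∈ K | ∀ v ∈ K, (inner ℝ (b + S u) (v - u) : ℝ) ≥ 0} with hSol
  have huSol : u ∈ Sol := ⟨huC.1, fun v hv => huK v hv⟩
  -- Minty characterization of the solution set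
  have hSolMinty : Sol = {w ∈ K | ∀ v ∈ K, 0 ≤ (inner ℝ (F v) (v - w) : ℝ)} := by
    ext w
    constructor
    · rintro ⟨hwK, hw⟩
      refine ⟨hwK, fun v hv => ?_⟩
      have h1 := hw v hv
      have h2 := hFmono v hv w hwK
      rw [inner_sub_left] at h2
      rw [ge_iff_le] at h1
      linarith
    · rintro ⟨hwK, hw⟩
      refine ⟨hwK, fun v hv => ?_⟩
      exact vi_minty_to_stampacchia hconv hFc hwK hw v hv
  refine ⟨⟨u, huSol⟩, ?_, ?_⟩
  · -- Convexity
    rw [hSolMinty]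
    rintro x ⟨hxK, hx⟩ y ⟨hyK, hy⟩ a b' ha hb hab
    refine ⟨hconv hxK hyK ha hb hab, fun v hv => ?_⟩
    have h1 : (v : EuclideanSpace ℝ (Fin m)) - (a • x + b' • y) = a • (v - x) + b' • (v - y) := by
      have h2 : a • (v:EuclideanSpace ℝ (Fin m)) + b' • v = v := by rw [← add_smul, hab, one_smul]
      rw [smul_sub, smul_sub, ← add_sub_add_comm, h2]
    rw [h1, inner_add_right, real_inner_smul_right, real_inner_smul_right]
    exact add_nonneg (mul_nonneg ha (hx v hv)) (mul_nonneg hb (hy v hv))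
  · -- Compactness
    have hclosed : IsClosed Sol := by
      have h1 : Sol = K ∩ ⋂ v ∈ K, {w : EuclideanSpace ℝ (Fin m) | 0 ≤ (inner ℝ (b + S w) (v - w) : ℝ)} := by
        ext w
        simp only [hSol, Set.mem_setOf_eq, Set.mem_inter_iff, Set.mem_iInter, ge_iff_le]
      rw [h1]
      refine hcl.inter (isClosed_biInter fun v _ => ?_)
      exact isClosed_le continuous_const
        (Continuous.inner (continuous_const.add hS) (continuous_const.sub continuous_id))
    have hsub : Sol ⊆ Metric.closedBall 0 R := by
      rintro w ⟨hwK, hw⟩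
      rw [Metric.mem_closedBall, dist_zero_right]
      exact le_of_lt (hbound w hwK (hw u₀ hu₀))
    exact (isCompact_closedBall (0:EuclideanSpace ℝ (Fin m)) R).of_isClosed_subset hclosed hsub
end
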